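/- In the regular local ring R = k[[x, y, z]] over a field k with m = (x, y, z), let Q = (x, y², zⁿ) for n ≥ 2 and I = Q : m. Then I = (x, y², yz^{n−1}, zⁿ) and I² = QI. -/

import Mathlib

open IsLocalRing TensorProduct

noncomputable section

/-- The minimal number of generators of a module. -/
def mu (R : Type) [CommRing R] (M : Type) [AddCommGroup M] [Module R M] : ℕ :=
  sInf {n : ℕ | ∃ s : Finset M, s.card = n ∧ Submodule.span R (s : Set M) = ⊤}

/-- The length of a module (as a natural number), defined as the Krull dimension of its
lattice of submodules. -/
def lengthNat (R : Type) [CommRing R] (M : Type) [AddCommGroup M] [Module R M] : ℕ :=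
  ((Order.krullDim (Submodule R M)).unbotD 0).toNat

/-- The (Krull) dimension of a module. -/
def moduleDim (R : Type) [CommRing R] (M : Type) [AddCommGroup M] [Module R M] : WithBot ℕ∞ :=
  ringKrullDim (R ⧸ Module.annihilator R M)

open Filter in
/-- The Hilbert–Samuel multiplicity `e(J, M)` of a module `M` with respect to an ideal `J`. -/
def eMult (R : Type) [CommRing R] (J : Ideal R) (M : Type) [AddCommGroup M] [Module R M] : ℕ :=
  sInf {e : ℕ | ∃ d : ℕ, moduleDim R M = (d : ℕ∞) ∧
    Tendsto (fun n : ℕ =>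
        ((d.factorial : ℝ) * (lengthNat R (M ⧸ (J ^ n • ⊤ : Submodule R M)))) / (n : ℝ) ^ d)
      atTop (nhds (e : ℝ))}

/-- A parameter ideal of a local ring: an ideal generated by a system of parameters. -/
def Ideal.IsParameterIdeal {R : Type} [CommRing R] [IsLocalRing R] (Q : Ideal R) : Prop :=
  ∃ (d : ℕ) (a : Fin d → R), ringKrullDim R = (d : ℕ) ∧ Q = Ideal.span (Set.range a) ∧
    Q ≤ maximalIdeal R ∧ maximalIdeal R ≤ Q.radical

/-- A subsystem of parameters: a family extendable to a full system of parameters. -/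
def IsSubsystemOfParameters {R : Type} [CommRing R] [IsLocalRing R] {r : ℕ}
    (a : Fin r → R) : Prop :=
  ∃ (d : ℕ) (hrd : r ≤ d) (b : Fin d → R), ringKrullDim R = (d : ℕ) ∧
    (∀ i : Fin r, b (Fin.castLE hrd i) = a i) ∧
    (Ideal.span (Set.range b)).IsParameterIdeal

/-- A Noetherian local ring is Cohen–Macaulay iff it admits a regular sequence in the maximal
ideal whose length is the Krull dimension. -/
def IsCohenMacaulayLocalRing (R : Type) [CommRing R] [IsLocalRing R] : Prop :=
  IsNoetherianRing R ∧
    ∃ (d : ℕ) (a : Fin d → R), ringKrullDim R = (d : ℕ) ∧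
      (∀ i, a i ∈ maximalIdeal R) ∧ RingTheory.Sequence.IsRegular R (List.ofFn a)

open CategoryTheory in
/-- The `i`-th Ext module of two modules over `R`. -/
def extGp (R : Type) [CommRing R] (M N : Type) [AddCommGroup M] [Module R M]
    [AddCommGroup N] [Module R N] (i : ℕ) : ModuleCat R :=
  ((Ext R (ModuleCat R) i).obj (Opposite.op (ModuleCat.of R M))).obj (ModuleCat.of R N)

/-- A canonical module of a (Cohen–Macaulay) Noetherian local ring `R`, characterized by
`Ext^i(k, K) = 0` for `i ≠ d` and `Ext^d(k, K) ≅ k`, where `d = dim R`. -/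
def IsCanonicalModule (R : Type) [CommRing R] [IsLocalRing R]
    (M : Type) [AddCommGroup M] [Module R M] : Prop :=
  Module.Finite R M ∧ ∃ d : ℕ, ringKrullDim R = (d : ℕ) ∧
    (∀ i : ℕ, i ≠ d → Subsingleton (extGp R (ResidueField R) M i)) ∧
    Nonempty ((extGp R (ResidueField R) M d) ≃ₗ[R] ResidueField R)

/-- Gorenstein local ring. -/
def IsGorensteinLocalRing (R : Type) [CommRing R] [IsLocalRing R] : Prop :=
  IsNoetherianRing R ∧ IsCanonicalModule R R

/-- A commutative ring is Gorenstein if all its localizations at primes are Gorenstein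
local rings. -/
def IsGorensteinRing (S : Type) [CommRing S] : Prop :=
  ∀ (P : Ideal S) (hP : P.IsPrime), letI := hP; IsGorensteinLocalRing (Localization.AtPrime P)

/-- Regular local ring: Noetherian local and the maximal ideal is generated by `dim R`
elements. -/
def IsRegularLocalRingP (R : Type) [CommRing R] [IsLocalRing R] : Prop :=
  IsNoetherianRing R ∧ ringKrullDim R = (mu R (maximalIdeal R) : ℕ)

/-- The Cohen–Macaulay type: the minimal number of generators of a canonical module. -/
def CMtype (R : Type) [CommRing R] [IsLocalRing R] : ℕ :=
  sInf {t : ℕ | ∃ K : ModuleCat.{0} R, IsCanonicalModule R K ∧ mu R K = t}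

/-- Almost Gorenstein local ring (Goto–Takahashi–Taniguchi): there is an embedding
`R ↪ K_R` into a canonical module whose cokernel `C` satisfies `μ(C) = e⁰_𝔪(C)`. -/
def IsAlmostGorensteinLocalRing (R : Type) [CommRing R] [IsLocalRing R] : Prop :=
  IsNoetherianRing R ∧ IsCohenMacaulayLocalRing R ∧
  ∃ (K : ModuleCat.{0} R), IsCanonicalModule R K ∧
    ∃ f : R →ₗ[R] K, Function.Injective f ∧
      mu R (K ⧸ LinearMap.range f) = eMult R (maximalIdeal R) (K ⧸ LinearMap.range f)

/-- `pd_R M ≤ n`, via vanishing of Ext. -/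
def projDimLE (R : Type) [CommRing R] (M : Type) [AddCommGroup M] [Module R M] (n : ℕ) : Prop :=
  ∀ (N : ModuleCat.{0} R) (i : ℕ), n < i → Subsingleton (extGp R M N i)

/-- The ideal `J` contains a regular sequence of length `g`. -/
def hasGradeGE (R : Type) [CommRing R] (J : Ideal R) (g : ℕ) : Prop :=
  ∃ a : Fin g → R, (∀ i, a i ∈ J) ∧ RingTheory.Sequence.IsRegular R (List.ofFn a)

/-- The ideal `J` has grade `g`. -/
def hasGrade (R : Type) [CommRing R] (J : Ideal R) (g : ℕ) : Prop :=
  hasGradeGE R J g ∧ ¬ hasGradeGE R J (g + 1)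

/-- `J` is a perfect ideal of grade `g`: `grade J = pd_R (R/J) = g`. -/
def IsPerfectIdealOfGrade (R : Type) [CommRing R] (J : Ideal R) (g : ℕ) : Prop :=
  hasGrade R J g ∧ projDimLE R (R ⧸ J) g ∧ ∀ m : ℕ, projDimLE R (R ⧸ J) m → g ≤ m

end


section SocleAux

open MvPowerSeries Finsupp

variable {k : Type} [Field k]




lemma aux_monomial_factor (d : Fin 3 →₀ ℕ) (f : MvPowerSeries (Fin 3) k)
    (h : ∀ e, coeff e f ≠ 0 → d ≤ e) :
    ∃ g, f = monomial d 1 * g := by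
  let g : MvPowerSeries (Fin 3) k := fun e => coeff (e + d) f
  refine ⟨g, MvPowerSeries.ext fun e => ?_⟩
  rw [coeff_monomial_mul]
  split_ifs with hd
  · rw [one_mul]
    show coeff e f = coeff (e - d + d) f
    rw [tsub_add_cancel_of_le hd]
  · by_contra hne
    exact hd (h e hne)

lemma aux_coeff_of_mem_span (S : Set (MvPowerSeries (Fin 3) k))
    (P : (Fin 3 →₀ ℕ) → Prop)
    (hup : ∀ e e', e ≤ e' → P e → P e')
    (hS : ∀ g ∈ S, ∀ e, coeff e g ≠ 0 → P e)
    (f : MvPowerSeries (Fin 3) k) (hf : f ∈ Ideal.span S) :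
    ∀ e, coeff e f ≠ 0 → P e := by
  classical
  induction hf using Submodule.span_induction with
  | mem g hg => exact hS g hg
  | zero => intro e he; simp at he
  | add a b _ _ ha hb =>
    intro e he
    rw [map_add] at he
    rcases (by by_contra hc; push_neg at hc; rw [hc.1, hc.2, add_zero] at he; exact he rfl :
      coeff e a ≠ 0 ∨ coeff e b ≠ 0) with h' | h'
    · exact ha e h'
    · exact hb e h'
  | smul a b _ hb =>
    intro e he
    rw [smul_eq_mul, MvPowerSeries.coeff_mul] at he
    obtain ⟨p, hp, hpne⟩ := Finset.exists_ne_zero_of_sum_ne_zero he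
    have h2 : coeff p.2 b ≠ 0 := right_ne_zero_of_mul hpne
    have := Finset.HasAntidiagonal.mem_antidiagonal.mp hp
    exact hup p.2 e (this ▸ le_add_self) (hb p.2 h2)

lemma aux_mem_span (d1 d2 d3 d4 : Fin 3 →₀ ℕ) (f : MvPowerSeries (Fin 3) k)
    (h : ∀ e, coeff e f ≠ 0 → d1 ≤ e ∨ d2 ≤ e ∨ d3 ≤ e ∨ d4 ≤ e) :
    f ∈ Ideal.span {(monomial d1 1 : MvPowerSeries (Fin 3) k),
      monomial d2 1, monomial d3 1, monomial d4 1} := by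
  classical
  set p1 : (Fin 3 →₀ ℕ) → Prop := fun e => d1 ≤ e with hp1
  set p2 : (Fin 3 →₀ ℕ) → Prop := fun e => ¬ d1 ≤ e ∧ d2 ≤ e with hp2
  set p3 : (Fin 3 →₀ ℕ) → Prop := fun e => ¬ d1 ≤ e ∧ ¬ d2 ≤ e ∧ d3 ≤ e with hp3
  set p4 : (Fin 3 →₀ ℕ) → Prop := fun e => ¬ d1 ≤ e ∧ ¬ d2 ≤ e ∧ ¬ d3 ≤ e ∧ d4 ≤ e with hp4
  let filt : ((Fin 3 →₀ ℕ) → Prop) → MvPowerSeries (Fin 3) k :=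
    fun p e => if p e then coeff e f else 0
  have hcoeff : ∀ p e, coeff e (filt p) = if p e then coeff e f else 0 := fun p e => rfl
  have hsum : f = filt p1 + filt p2 + filt p3 + filt p4 := by
    apply MvPowerSeries.ext
    intro e
    simp only [map_add, hcoeff]
    by_cases h1 : d1 ≤ e <;> by_cases h2 : d2 ≤ e <;> by_cases h3 : d3 ≤ e <;>
      by_cases h4 : d4 ≤ e <;>
      simp only [hp1, hp2, hp3, hp4, h1, h2, h3, h4, if_true, if_false, not_true, not_false_iff,
        true_and, false_and, and_true, and_false, if_neg, add_zero, zero_add] <;>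
      try rfl
    · by_cases h0 : coeff e f = 0
      · simp [h0]
      · rcases h e h0 with h' | h' | h' | h' <;> tauto
  have key : ∀ (p : (Fin 3 →₀ ℕ) → Prop) (d : Fin 3 →₀ ℕ), (∀ e, p e → d ≤ e) →
      (monomial d 1 : MvPowerSeries (Fin 3) k) ∈
        ({(monomial d1 1 : MvPowerSeries (Fin 3) k), monomial d2 1, monomial d3 1,
          monomial d4 1} : Set (MvPowerSeries (Fin 3) k)) →
      filt p ∈ Ideal.span {(monomial d1 1 : MvPowerSeries (Fin 3) k),
        monomial d2 1, monomial d3 1, monomial d4 1} := by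
    intro p d hpd hmem
    have : ∀ e, coeff e (filt p) ≠ 0 → d ≤ e := by
      intro e he
      rw [hcoeff] at he
      by_cases hpe : p e
      · exact hpd e hpe
      · simp [hpe] at he
    obtain ⟨g, hg⟩ := aux_monomial_factor d (filt p) this
    rw [hg]
    exact Ideal.mul_mem_right g _ (Ideal.subset_span hmem)
  rw [hsum]
  refine Ideal.add_mem _ (Ideal.add_mem _ (Ideal.add_mem _ ?_ ?_) ?_) ?_
  · exact key p1 d1 (fun e he => he) (by simp)
  · exact key p2 d2 (fun e he => he.2) (by simp)
  · exact key p3 d3 (fun e he => he.2.2) (by simp)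
  · exact key p4 d4 (fun e he => he.2.2.2) (by simp)

end SocleAux

open MvPowerSeries Finsupp in
theorem socle_example_power_series
    (k : Type) [Field k] (n : ℕ) (hn : 2 ≤ n)
    (x y z : MvPowerSeries (Fin 3) k)
    (hx : x = MvPowerSeries.X 0) (hy : y = MvPowerSeries.X 1)
    (hz : z = MvPowerSeries.X 2)
    (m Q I : Ideal (MvPowerSeries (Fin 3) k))
    (hm : m = Ideal.span {x, y, z})
    (hQ : Q = Ideal.span {x, y ^ 2, z ^ n})
    (hI : I = Q.colon m) :
    I = Ideal.span {x, y ^ 2, y * z ^ (n - 1), z ^ n} ∧ I ^ 2 = Q * I := by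
  subst hx hy hz
  set X0 : MvPowerSeries (Fin 3) k := MvPowerSeries.X 0 with hX0
  set X1 : MvPowerSeries (Fin 3) k := MvPowerSeries.X 1 with hX1
  set X2 : MvPowerSeries (Fin 3) k := MvPowerSeries.X 2 with hX2
  set d1 : Fin 3 →₀ ℕ := single 0 1 with hd1
  set d2 : Fin 3 →₀ ℕ := single 1 2 with hd2
  set d3 : Fin 3 →₀ ℕ := single 1 1 + single 2 (n - 1) with hd3
  set d4 : Fin 3 →₀ ℕ := single 2 n with hd4
  have hm1 : X0 = monomial d1 1 := X_def 0
  have hm2 : X1 ^ 2 = monomial d2 1 := X_pow_eq 1 2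
  have hm3 : X1 * X2 ^ (n - 1) = monomial d3 1 := by
    rw [hX1, hX2, X_def, X_pow_eq, monomial_mul_monomial, one_mul]
  have hm4 : X2 ^ n = monomial d4 1 := X_pow_eq 2 n
  -- generators of Q are in Q, generators of J are in J
  have hxQ : X0 ∈ Q := hQ ▸ Ideal.subset_span (by simp)
  have hy2Q : X1 ^ 2 ∈ Q := hQ ▸ Ideal.subset_span (by simp)
  have hznQ : X2 ^ n ∈ Q := hQ ▸ Ideal.subset_span (by simp)
  -- the key equality I = J
  have hIJ : I = Ideal.span {X0, X1 ^ 2, X1 * X2 ^ (n - 1), X2 ^ n} := by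
    apply le_antisymm
    · -- I ≤ J
      intro f hf
      rw [hI] at hf
      have hym : X1 ∈ m := hm ▸ Ideal.subset_span (by simp)
      have hzm : X2 ∈ m := hm ▸ Ideal.subset_span (by simp)
      have hfy : f * X1 ∈ Q := by
        have := Submodule.mem_colon.mp hf X1 hym; rwa [smul_eq_mul] at this
      have hfz : f * X2 ∈ Q := by
        have := Submodule.mem_colon.mp hf X2 hzm; rwa [smul_eq_mul] at this
      have hPQ : ∀ g ∈ ({X0, X1 ^ 2, X2 ^ n} : Set (MvPowerSeries (Fin 3) k)),
          ∀ e : Fin 3 →₀ ℕ, coeff e g ≠ 0 → (1 ≤ e 0 ∨ 2 ≤ e 1 ∨ n ≤ e 2) := by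
        intro g hg e he
        rcases hg with rfl | rfl | rfl
        · rw [hm1, coeff_monomial] at he
          split_ifs at he with h
          · subst h; left; simp [hd1]
          · exact absurd rfl he
        · rw [hm2, coeff_monomial] at he
          split_ifs at he with h
          · subst h; right; left; simp [hd2]
          · exact absurd rfl he
        · rw [hm4, coeff_monomial] at he
          split_ifs at he with h
          · subst h; right; right; simp [hd4]
          · exact absurd rfl he
      have hup : ∀ e e' : Fin 3 →₀ ℕ, e ≤ e' → (1 ≤ e 0 ∨ 2 ≤ e 1 ∨ n ≤ e 2) →
          (1 ≤ e' 0 ∨ 2 ≤ e' 1 ∨ n ≤ e' 2) := by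
        intro e e' hle h
        rw [Finsupp.le_def] at hle
        have h0 := hle 0; have h1 := hle 1; have h2 := hle 2
        omega
      have HY := aux_coeff_of_mem_span _ _ hup hPQ (f * X1) (hQ ▸ hfy)
      have HZ := aux_coeff_of_mem_span _ _ hup hPQ (f * X2) (hQ ▸ hfz)
      rw [hm1, hm2, hm3, hm4]
      apply aux_mem_span
      intro e he
      have h1 := HY (e + single 1 1) (by
        rw [hX1, X_def, coeff_add_mul_monomial, mul_one]; exact he)
      have h2 := HZ (e + single 2 1) (by
        rw [hX2, X_def, coeff_add_mul_monomial, mul_one]; exact he)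
      simp only [Finsupp.add_apply, Finsupp.single_apply,
        show ((1:Fin 3) = 0) = False from by decide, show ((1:Fin 3) = 1) = True from by decide,
        show ((1:Fin 3) = 2) = False from by decide, show ((2:Fin 3) = 0) = False from by decide,
        show ((2:Fin 3) = 1) = False from by decide, show ((2:Fin 3) = 2) = True from by decide,
        if_true, if_false, add_zero] at h1 h2
      have hd3le : d3 ≤ e ↔ 1 ≤ e 1 ∧ n - 1 ≤ e 2 := by
        rw [hd3, Finsupp.le_def]
        constructor
        · intro h
          refine ⟨?_, ?_⟩
          · have := h 1; simpa [Finsupp.single_apply] using this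
          · have := h 2; simpa [Finsupp.single_apply] using this
        · intro h i
          fin_cases i <;> simp [Finsupp.single_apply] <;> omega
      rw [hd1, hd2, hd4, Finsupp.single_le_iff, Finsupp.single_le_iff, hd3le,
        Finsupp.single_le_iff]
      omega
    · -- J ≤ I
      have hJm : Ideal.span {X0, X1 ^ 2, X1 * X2 ^ (n - 1), X2 ^ n} * m ≤ Q := by
        rw [hm, Ideal.span_mul_span']
        apply Ideal.span_le.mpr
        rintro _ ⟨a, ha, b, hb, rfl⟩
        dsimp only
        simp only [Set.mem_insert_iff, Set.mem_singleton_iff] at ha hb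
        have hz1 : (X2 : MvPowerSeries (Fin 3) k) ^ (n - 1) * X2 = X2 ^ n := by
          rw [← pow_succ]; congr 1; omega
        rcases ha with rfl | rfl | rfl | rfl
        · exact Ideal.mul_mem_right b _ hxQ
        · exact Ideal.mul_mem_right b _ hy2Q
        · rcases hb with rfl | rfl | rfl
          · rw [mul_comm]; exact Ideal.mul_mem_right _ _ hxQ
          · rw [show X1 * X2 ^ (n - 1) * X1 = X1 ^ 2 * X2 ^ (n - 1) by ring]
            exact Ideal.mul_mem_right _ _ hy2Q
          · rw [mul_assoc, hz1]
            exact Ideal.mul_mem_left _ _ hznQ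
        · exact Ideal.mul_mem_right b _ hznQ
      intro r hr
      rw [hI, Submodule.mem_colon]
      intro p hp
      rw [smul_eq_mul]
      exact hJm (Ideal.mul_mem_mul hr hp)
  refine ⟨hIJ, ?_⟩
  -- memberships in I
  have hxI : X0 ∈ I := hIJ ▸ Ideal.subset_span (by simp)
  have hy2I : X1 ^ 2 ∈ I := hIJ ▸ Ideal.subset_span (by simp)
  have hyzI : X1 * X2 ^ (n - 1) ∈ I := hIJ ▸ Ideal.subset_span (by simp)
  have hznI : X2 ^ n ∈ I := hIJ ▸ Ideal.subset_span (by simp)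
  apply le_antisymm
  · -- I² ≤ QI
    rw [sq, hIJ, Ideal.span_mul_span']
    apply Ideal.span_le.mpr
    rintro _ ⟨a, ha, b, hb, rfl⟩
    dsimp only
    have hbI := Ideal.subset_span hb
    have haI := Ideal.subset_span ha
    simp only [Set.mem_insert_iff, Set.mem_singleton_iff] at ha hb
    rcases ha with rfl | rfl | rfl | rfl
    · exact Ideal.mul_mem_mul hxQ hbI
    · exact Ideal.mul_mem_mul hy2Q hbI
    · rcases hb with rfl | rfl | rfl | rfl
      · rw [mul_comm (X1 * X2 ^ (n - 1)) X0]; exact Ideal.mul_mem_mul hxQ haI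
      · rw [mul_comm (X1 * X2 ^ (n - 1)) (X1 ^ 2)]; exact Ideal.mul_mem_mul hy2Q haI
      · have key : X1 * X2 ^ (n - 1) * (X1 * X2 ^ (n - 1)) =
            X2 ^ n * (X1 ^ 2 * X2 ^ (n - 2)) := by
          have h : (X2 : MvPowerSeries (Fin 3) k) ^ (n - 1) * X2 ^ (n - 1) =
              X2 ^ n * X2 ^ (n - 2) := by
            rw [← pow_add, ← pow_add]; congr 1; omega
          calc X1 * X2 ^ (n - 1) * (X1 * X2 ^ (n - 1))
              = X1 ^ 2 * (X2 ^ (n - 1) * X2 ^ (n - 1)) := by ring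
            _ = X1 ^ 2 * (X2 ^ n * X2 ^ (n - 2)) := by rw [h]
            _ = X2 ^ n * (X1 ^ 2 * X2 ^ (n - 2)) := by ring
        rw [key]
        exact Ideal.mul_mem_mul hznQ (Ideal.mul_mem_right _ _
          (Ideal.subset_span (by simp)))
      · rw [mul_comm (X1 * X2 ^ (n - 1)) (X2 ^ n)]; exact Ideal.mul_mem_mul hznQ haI
    · exact Ideal.mul_mem_mul hznQ hbI
  · -- QI ≤ I²
    rw [sq]
    apply Ideal.mul_mono_left
    rw [hQ, hIJ]
    apply Ideal.span_mono
    intro t ht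
    simp only [Set.mem_insert_iff, Set.mem_singleton_iff] at ht ⊢
    tauto
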